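/- Let A be a Banach algebra. A functional a' ∈ A* is weakly almost periodic (i.e., for all bounded nets (a_i), (b_j) in the unit ball of A, the iterated limits lim_i lim_j ⟨a', a_i b_j⟩ and lim_j lim_i ⟨a', a_i b_j⟩ agree whenever both exist) if and only if ⟨a'' b'', a'⟩ = ⟨a'' ∘ b'', a'⟩ for all a'', b'' ∈ A**, where a'' b'' and a'' ∘ b'' denote the first and second Arens products. Consequently, A is Arens regular if and only if wap(A) = A*. -/

import Mathlib

open ContinuousLinearMap NormedSpace Filter Topology Metric

noncomputable section

namespace Arens

instance instNormedAddCommGroupBidual (E : Type*) [NormedAddCommGroup E] [NormedSpace ℂ E] :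
    NormedAddCommGroup (StrongDual ℂ (StrongDual ℂ E)) :=
  ContinuousLinearMap.toNormedAddCommGroup

instance instNormedSpaceBidual (E : Type*) [NormedAddCommGroup E] [NormedSpace ℂ E] :
    NormedSpace ℂ (StrongDual ℂ (StrongDual ℂ E)) :=
  ContinuousLinearMap.toNormedSpace

section Bilinear

variable {X Y Z : Type*} [NormedAddCommGroup X] [NormedSpace ℂ X]
  [NormedAddCommGroup Y] [NormedSpace ℂ Y] [NormedAddCommGroup Z] [NormedSpace ℂ Z]

/-- The Arens adjoint `m*` of a bounded bilinear map `m : X × Y → Z`,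
`⟨m*(z',x), y⟩ = ⟨z', m(x,y)⟩`. -/
def adj (f : X →L[ℂ] Y →L[ℂ] Z) : StrongDual ℂ Z →L[ℂ] X →L[ℂ] StrongDual ℂ Y :=
  ((ContinuousLinearMap.compL ℂ X (Y →L[ℂ] Z) (Y →L[ℂ] ℂ)).flip f).comp
    (ContinuousLinearMap.compL ℂ Y Z ℂ)

@[simp] lemma adj_apply (f : X →L[ℂ] Y →L[ℂ] Z) (z' : StrongDual ℂ Z) (x : X) (y : Y) :
    adj f z' x y = z' (f x y) := rfl

/-- The Arens triple-adjoint extension `m*** : X** × Y** → Z**` of a bounded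
bilinear map `m : X × Y → Z`. -/
def ext3 (f : X →L[ℂ] Y →L[ℂ] Z) :
    StrongDual ℂ (StrongDual ℂ X) →L[ℂ] StrongDual ℂ (StrongDual ℂ Y) →L[ℂ] StrongDual ℂ (StrongDual ℂ Z) :=
  adj (adj (adj f))

/-- Weak-star convergence of a net `(a i)` of `X` (canonically embedded in `X**`)
to an element `F` of the bidual `X**`. -/
def WStarTendsto {ι : Type*} (a : ι → X) (l : Filter ι) (F : StrongDual ℂ (StrongDual ℂ X)) : Prop :=
  ∀ x' : StrongDual ℂ X, Tendsto (fun i => x' (a i)) l (𝓝 (F x'))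

end Bilinear

section Algebra

variable (A : Type*) [NonUnitalNormedRing A] [NormedSpace ℂ A]
  [IsScalarTower ℂ A A] [SMulCommClass ℂ A A]

/-- The multiplication of a (non-unital) Banach algebra as a bounded bilinear map. -/
abbrev mulCLM : A →L[ℂ] A →L[ℂ] A := ContinuousLinearMap.mul ℂ A

/-- The first Arens product on the bidual `A**`. -/
def fstArens (F G : StrongDual ℂ (StrongDual ℂ A)) : StrongDual ℂ (StrongDual ℂ A) := ext3 (mulCLM A) F G

/-- The second Arens product on the bidual `A**` (`m^{t***t}`). -/
def sndArens (F G : StrongDual ℂ (StrongDual ℂ A)) : StrongDual ℂ (StrongDual ℂ A) :=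
  ext3 ((mulCLM A).flip) G F

/-- A Banach algebra is Arens regular when its two Arens products coincide. -/
def ArensRegular : Prop := ∀ F G : StrongDual ℂ (StrongDual ℂ A), fstArens A F G = sndArens A F G

end Algebra

section ModuleWC

universe u
variable {A : Type u} {B : Type*} [NonUnitalNormedRing A] [NormedSpace ℂ A]
  [NormedAddCommGroup B] [NormedSpace ℂ B]

/-- For a left Banach `A`-module action `πl` on `B`, the element `b' a ∈ B*`,
`⟨b' a, b⟩ = ⟨b', a • b⟩`. -/
def dualSmulL (πl : A →L[ℂ] B →L[ℂ] B) (b' : StrongDual ℂ B) (a : A) : StrongDual ℂ B := adj πl b' a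

/-- The Arens extension `b' a'' ∈ B***`, `⟨b'', b' a''⟩ = ⟨π_ℓ***(a'', b''), b'⟩`. -/
def dualSmulLStar (πl : A →L[ℂ] B →L[ℂ] B) (b' : StrongDual ℂ B) (F : StrongDual ℂ (StrongDual ℂ A)) :
    StrongDual ℂ (StrongDual ℂ (StrongDual ℂ B)) :=
  (inclusionInDoubleDual ℂ (StrongDual ℂ B) b').comp (ext3 πl F)

/-- `b' ∈ B*` has the left-weak*-weak convergence property (`Lw*wc`) with respect to `A`:
for every net `(a_α) ⊆ A` with `a_α → a''` weak* in `A**`, the net `b' a_α` converges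
weakly to `b' a''` in `B*`. -/
def LWStarWC (πl : A →L[ℂ] B →L[ℂ] B) (b' : StrongDual ℂ B) : Prop :=
  ∀ (ι : Type u) (l : Filter ι) (a : ι → A) (F : StrongDual ℂ (StrongDual ℂ A)),
    WStarTendsto a l F →
    ∀ b'' : StrongDual ℂ (StrongDual ℂ B),
      Tendsto (fun i => b'' (dualSmulL πl b' (a i))) l (𝓝 (dualSmulLStar πl b' F b''))

/-- For a right Banach `A`-module action `πr` on `B`, the element `a b' ∈ B*`,
`⟨a b', b⟩ = ⟨b', b • a⟩`. -/
def dualSmulR (πr : B →L[ℂ] A →L[ℂ] B) (a : A) (b' : StrongDual ℂ B) : StrongDual ℂ B :=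
  adj πr.flip b' a

/-- The Arens extension `a'' b' ∈ B***`, `⟨b'', a'' b'⟩ = ⟨π_r^{t***}(a'', b''), b'⟩`. -/
def dualSmulRStar (πr : B →L[ℂ] A →L[ℂ] B) (F : StrongDual ℂ (StrongDual ℂ A)) (b' : StrongDual ℂ B) :
    StrongDual ℂ (StrongDual ℂ (StrongDual ℂ B)) :=
  (inclusionInDoubleDual ℂ (StrongDual ℂ B) b').comp (ext3 πr.flip F)

/-- `b' ∈ B*` has the right-weak*-weak convergence property (`Rw*wc`) with respect to `A`. -/
def RWStarWC (πr : B →L[ℂ] A →L[ℂ] B) (b' : StrongDual ℂ B) : Prop :=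
  ∀ (ι : Type u) (l : Filter ι) (a : ι → A) (F : StrongDual ℂ (StrongDual ℂ A)),
    WStarTendsto a l F →
    ∀ b'' : StrongDual ℂ (StrongDual ℂ B),
      Tendsto (fun i => b'' (dualSmulR πr (a i) b')) l (𝓝 (dualSmulRStar πr F b' b''))

end ModuleWC

section AlgebraWC

variable (A : Type u) [NonUnitalNormedRing A] [NormedSpace ℂ A]
  [IsScalarTower ℂ A A] [SMulCommClass ℂ A A]

/-- The product `a'' a' ∈ A*` (first step of the first Arens product):
`⟨a'' a', a⟩ = ⟨a'', a' a⟩` where `⟨a' a, b⟩ = ⟨a', a b⟩`. -/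
def biSmul (F : StrongDual ℂ (StrongDual ℂ A)) (a' : StrongDual ℂ A) : StrongDual ℂ A :=
  F.comp (adj (mulCLM A) a')

/-- The element `a · a' ∈ A*`, `⟨a a', b⟩ = ⟨a', b a⟩`. -/
def leftMulDual (a : A) (a' : StrongDual ℂ A) : StrongDual ℂ A := a'.comp ((mulCLM A).flip a)

/-- `A*` has the `Rw*wc`-property with respect to `A`: for every `a' ∈ A*` and every net
`(a_α) ⊆ A` with `a_α → a''` weak* in `A**`, the net `a_α a'` (`⟨a_α a', b⟩ = ⟨a', b a_α⟩`)
converges weakly in `A*` to `a'' a'`. -/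
def RWStarWCDualProp : Prop :=
  ∀ (a' : StrongDual ℂ A) (ι : Type u) (l : Filter ι) (a : ι → A) (F : StrongDual ℂ (StrongDual ℂ A)),
    WStarTendsto a l F →
    ∀ x'' : StrongDual ℂ (StrongDual ℂ A),
      Tendsto (fun i => x'' (leftMulDual A (a i) a')) l (𝓝 (x'' (biSmul A F a')))

/-- `A*` has the `Lw*wc`-property with respect to `A`. -/
def LWStarWCDualProp : Prop := ∀ a' : StrongDual ℂ A, LWStarWC (mulCLM A) a'

/-- `A**` has the `Lw*wc`-property with respect to `A`: for every `x'' ∈ A**` and every net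
`(a_α) ⊆ A` with `a_α → a''` weak* in `A**`, the net `x'' a_α` converges weakly in `A**`
to `x'' a''`. -/
def LWStarWCBidualProp : Prop :=
  ∀ (x'' : StrongDual ℂ (StrongDual ℂ A)) (ι : Type u) (l : Filter ι) (a : ι → A) (F : StrongDual ℂ (StrongDual ℂ A)),
    WStarTendsto a l F →
    ∀ Φ : StrongDual ℂ (StrongDual ℂ (StrongDual ℂ A)),
      Tendsto (fun i => Φ (fstArens A x'' (inclusionInDoubleDual ℂ A (a i)))) l
        (𝓝 (Φ (fstArens A x'' F)))

/-- `D : A → A*` is a derivation: `D(ab) = a·D(b) + D(a)·b`, where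
`(a·f)(x) = f(x a)` and `(f·b)(x) = f(b x)`. -/
def IsDerivation (D : A →L[ℂ] StrongDual ℂ A) : Prop :=
  ∀ a b : A, D (a * b) = (D b).comp ((mulCLM A).flip a) + (D a).comp (mulCLM A b)

/-- `A` is weakly amenable: every bounded derivation `D : A → A*` is inner. -/
def WeaklyAmenable : Prop :=
  ∀ D : A →L[ℂ] StrongDual ℂ A, IsDerivation A D →
    ∃ f : StrongDual ℂ A, ∀ a : A, D a = f.comp ((mulCLM A).flip a) - f.comp (mulCLM A a)

/-- The left action of `A**` (with the first Arens product) on `A***`: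
`(F·Φ)(G) = Φ(G F)`. -/
def ddLeftAct (F : StrongDual ℂ (StrongDual ℂ A)) (Φ : StrongDual ℂ (StrongDual ℂ (StrongDual ℂ A))) :
    StrongDual ℂ (StrongDual ℂ (StrongDual ℂ A)) :=
  Φ.comp ((ext3 (mulCLM A)).flip F)

/-- The right action of `A**` (with the first Arens product) on `A***`:
`(Φ·F)(G) = Φ(F G)`. -/
def ddRightAct (F : StrongDual ℂ (StrongDual ℂ A)) (Φ : StrongDual ℂ (StrongDual ℂ (StrongDual ℂ A))) :
    StrongDual ℂ (StrongDual ℂ (StrongDual ℂ A)) :=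
  Φ.comp (ext3 (mulCLM A) F)

/-- A bounded map `D : A** → A***` is a derivation for the first Arens product. -/
def IsDerivationDD (D : StrongDual ℂ (StrongDual ℂ A) →L[ℂ] StrongDual ℂ (StrongDual ℂ (StrongDual ℂ A))) : Prop :=
  ∀ F G : StrongDual ℂ (StrongDual ℂ A),
    D (fstArens A F G) = ddLeftAct A F (D G) + ddRightAct A G (D F)

/-- `A**` (with the first Arens product) is weakly amenable. -/
def WeaklyAmenableDD : Prop :=
  ∀ D : StrongDual ℂ (StrongDual ℂ A) →L[ℂ] StrongDual ℂ (StrongDual ℂ (StrongDual ℂ A)), IsDerivationDD A D →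
    ∃ Φ : StrongDual ℂ (StrongDual ℂ (StrongDual ℂ A)), ∀ F, D F = ddLeftAct A F Φ - ddRightAct A F Φ

/-- `A*** A** ⊆ A*`: each product `x''' x''` (`⟨x''' x'', a''⟩ = ⟨x''', x'' a''⟩`)
lies in the canonical image of `A*` in `A***`. -/
def TripleDualMulIntoDual : Prop :=
  ∀ (Φ : StrongDual ℂ (StrongDual ℂ (StrongDual ℂ A))) (F : StrongDual ℂ (StrongDual ℂ A)),
    ∃ a' : StrongDual ℂ A, ddRightAct A F Φ = inclusionInDoubleDual ℂ (StrongDual ℂ A) a'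

end AlgebraWC

section DualMap

variable {X Y : Type*} [NormedAddCommGroup X] [NormedSpace ℂ X]
  [NormedAddCommGroup Y] [NormedSpace ℂ Y]

/-- The Banach-space adjoint of a bounded operator. -/
def dualMap' (T : X →L[ℂ] Y) : StrongDual ℂ Y →L[ℂ] StrongDual ℂ X :=
  (ContinuousLinearMap.compL ℂ X Y ℂ).flip T

/-- The second adjoint `D'' : A** → A***` of `D : A → A*`. -/
def secondAdjoint {A : Type*} [NonUnitalNormedRing A] [NormedSpace ℂ A]
    (D : A →L[ℂ] StrongDual ℂ A) :
    StrongDual ℂ (StrongDual ℂ A) →L[ℂ] StrongDual ℂ (StrongDual ℂ (StrongDual ℂ A)) :=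
  dualMap' (dualMap' D)

end DualMap

section Biregular

variable (A B : Type*) [NonUnitalNormedRing A] [NormedSpace ℂ A]
  [NonUnitalNormedRing B] [NormedSpace ℂ B]

/-- A bounded bilinear form `m : A × B → ℂ` is biregular (Ülger): for any sequences
`(a_i), (aa2_j)` in the unit ball of `A` and `(b_i), (bb_j)` in the unit ball of `B`,
the two iterated limits of `m(a_i aa2_j, b_i bb_j)` coincide whenever both exist. -/
def Biregular (m : A →L[ℂ] B →L[ℂ] ℂ) : Prop :=
  ∀ (a aa2 : ℕ → A) (b bb : ℕ → B),
    (∀ i, ‖a i‖ ≤ 1) → (∀ j, ‖aa2 j‖ ≤ 1) → (∀ i, ‖b i‖ ≤ 1) → (∀ j, ‖bb j‖ ≤ 1) →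
    ∀ (g h : ℕ → ℂ) (L L' : ℂ),
      (∀ i, Tendsto (fun j => m (a i * aa2 j) (b i * bb j)) atTop (𝓝 (g i))) →
      Tendsto g atTop (𝓝 L) →
      (∀ j, Tendsto (fun i => m (a i * aa2 j) (b i * bb j)) atTop (𝓝 (h j))) →
      Tendsto h atTop (𝓝 L') → L = L'

/-- Arens regularity of the projective tensor product `A ⊗̂ B`.  By Ülger's theorem
(`[22, Theorem 3.4]`), `A ⊗̂ B` is Arens regular if and only if every bounded bilinear
form `m : A × B → ℂ` is biregular; since the dual of `A ⊗̂ B` is exactly the space of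
bounded bilinear forms on `A × B`, we take this equivalent characterization as the
formalization of Arens regularity of `A ⊗̂ B`. -/
def ProjArensRegular : Prop := ∀ m : A →L[ℂ] B →L[ℂ] ℂ, Biregular A B m

end Biregular

end Arens

/-- `a' ∈ A*` is weakly almost periodic: for all nets `(a_i)`, `(b_j)` in the unit ball
of `A`, the iterated limits of `⟨a', a_i b_j⟩` agree whenever both exist. -/
def Arens.WAP {A : Type u} [NonUnitalNormedRing A] [NormedSpace ℂ A]
    (a' : StrongDual ℂ A) : Prop :=
  ∀ (ι κ : Type u) (li : Filter ι) (lj : Filter κ), li.NeBot → lj.NeBot →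
    ∀ (a : ι → A) (b : κ → A), (∀ i, ‖a i‖ ≤ 1) → (∀ j, ‖b j‖ ≤ 1) →
    ∀ (g : ι → ℂ) (h : κ → ℂ) (L L' : ℂ),
      (∀ i, Tendsto (fun j => a' (a i * b j)) lj (𝓝 (g i))) → Tendsto g li (𝓝 L) →
      (∀ j, Tendsto (fun i => a' (a i * b j)) li (𝓝 (h j))) → Tendsto h lj (𝓝 L') →
      L = L'

namespace ArensAux

open Arens

variable {A : Type*} [NormedAddCommGroup A] [NormedSpace ℂ A]

lemma pi_clm_decomp {ι : Type*} [Fintype ι] [DecidableEq ι]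
    (f : (ι → ℂ) →L[ℂ] ℂ) (v : ι → ℂ) :
    f v = ∑ k, v k * f (Pi.single k 1) := by
  conv_lhs => rw [← Finset.univ_sum_single v, map_sum]
  refine Finset.sum_congr rfl fun k _ => ?_
  have hv : Pi.single k (v k) = v k • (Pi.single k 1 : ι → ℂ) := by
    rw [← Pi.single_smul, smul_eq_mul, mul_one]
  rw [hv, map_smul, smul_eq_mul]

/-- Goldstine's theorem, finite approximation form. -/
lemma goldstine (F : StrongDual ℂ (StrongDual ℂ A)) (hF : ‖F‖ ≤ 1)
    (S : Finset (StrongDual ℂ A)) {ε : ℝ} (hε : 0 < ε) :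
    ∃ a : A, ‖a‖ ≤ 1 ∧ ∀ x' ∈ S, ‖x' a - F x'‖ ≤ ε := by
  classical
  by_contra hcon
  push_neg at hcon
  set T : A →L[ℂ] (↥S → ℂ) := ContinuousLinearMap.pi (fun k => (k.1 : StrongDual ℂ A)) with hTdef
  set c : ↥S → ℂ := fun k => F k.1 with hcdef
  set K : Set (↥S → ℂ) := closure (⇑T '' closedBall (0 : A) 1) with hKdef
  have hKconv : Convex ℝ K :=
    ((convex_closedBall (0 : A) 1).linear_image
      ((T : A →ₗ[ℂ] (↥S → ℂ)).restrictScalars ℝ)).closure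
  have hcK : c ∉ K := by
    have hsub : ⇑T '' closedBall (0 : A) 1 ⊆ {v : ↥S → ℂ | ε ≤ dist v c} := by
      rintro _ ⟨a, ha, rfl⟩
      obtain ⟨x', hx'S, hx'⟩ := hcon a (mem_closedBall_zero_iff.mp ha)
      have h1 : dist (T a ⟨x', hx'S⟩) (c ⟨x', hx'S⟩) ≤ dist (T a) c :=
        dist_le_pi_dist _ _ _
      have h2 : ε < dist (T a ⟨x', hx'S⟩) (c ⟨x', hx'S⟩) := by
        rw [dist_eq_norm]; exact hx'
      exact le_of_lt (h2.trans_le h1)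
    have hcl : K ⊆ {v : ↥S → ℂ | ε ≤ dist v c} :=
      closure_minimal hsub (isClosed_le continuous_const
        ((continuous_id.dist continuous_const)))
    intro hmem
    have := hcl hmem
    simp only [Set.mem_setOf_eq, dist_self] at this
    linarith
  obtain ⟨f, u, hfK, hfc⟩ :=
    RCLike.geometric_hahn_banach_closed_point (𝕜 := ℂ) hKconv isClosed_closure hcK
  have hmemK : ∀ a : A, ‖a‖ ≤ 1 → T a ∈ K := fun a ha =>
    subset_closure ⟨a, mem_closedBall_zero_iff.mpr ha, rfl⟩
  have hu0 : 0 < u := by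
    have := hfK (T 0) (hmemK 0 (by simp))
    simpa using this
  set y' : StrongDual ℂ A := f.comp T with hy'def
  have hlt : ∀ a : A, ‖a‖ ≤ 1 → (y' a).re < u := by
    intro a ha
    have := hfK (T a) (hmemK a ha)
    simpa [hy'def] using this
  have habs : ∀ a : A, ‖a‖ ≤ 1 → ‖y' a‖ ≤ u := by
    intro a ha
    by_cases hz : y' a = 0
    · simp [hz, hu0.le]
    · set θ : ℂ := (‖y' a‖ : ℂ) / y' a with hθdef
      have hθ : ‖θ‖ = 1 := by
        rw [hθdef, norm_div, Complex.norm_real, Real.norm_of_nonneg (norm_nonneg _),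
          div_self (norm_ne_zero_iff.mpr hz)]
      have hθa : ‖θ • a‖ ≤ 1 := by rw [norm_smul, hθ, one_mul]; exact ha
      have hval : y' (θ • a) = (‖y' a‖ : ℂ) := by
        rw [map_smul, smul_eq_mul, hθdef, div_mul_cancel₀ _ hz]
      have := hlt (θ • a) hθa
      rw [hval] at this
      simpa using this.le
  have hnorm : ‖y'‖ ≤ u := by
    refine y'.opNorm_le_bound hu0.le fun a => ?_
    by_cases ha : a = 0
    · simp [ha]
    · have hna : (0 : ℝ) < ‖a‖ := norm_pos_iff.mpr ha
      have h1 : ‖y' (((‖a‖ : ℂ))⁻¹ • a)‖ ≤ u := by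
        refine habs _ ?_
        rw [norm_smul, norm_inv, Complex.norm_real, Real.norm_of_nonneg (norm_nonneg _),
          inv_mul_cancel₀ hna.ne']
      rw [map_smul, norm_smul, norm_inv, Complex.norm_real,
        Real.norm_of_nonneg (norm_nonneg _)] at h1
      calc ‖y' a‖ = ‖a‖ * (‖a‖⁻¹ * ‖y' a‖) := by field_simp
        _ ≤ ‖a‖ * u := by
            exact mul_le_mul_of_nonneg_left h1 (norm_nonneg _)
        _ = u * ‖a‖ := mul_comm _ _
  have hkey : F y' = f c := by
    have hy'sum : y' = ∑ k : ↥S, f (Pi.single k 1) • (k.1 : StrongDual ℂ A) := by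
      ext a
      have h1 : y' a = f (T a) := rfl
      rw [h1, pi_clm_decomp]
      rw [ContinuousLinearMap.sum_apply]
      refine Finset.sum_congr rfl fun k _ => ?_
      rw [ContinuousLinearMap.smul_apply, smul_eq_mul, mul_comm]
      rfl
    rw [hy'sum, map_sum, pi_clm_decomp f c]
    refine Finset.sum_congr rfl fun k _ => ?_
    rw [map_smul, smul_eq_mul, mul_comm]
  have hre : u < (F y').re := by rw [hkey]; exact hfc
  have hle : (F y').re ≤ u := by
    have h1 : (F y').re ≤ ‖F y'‖ := Complex.re_le_norm _
    have h2 : ‖F y'‖ ≤ ‖F‖ * ‖y'‖ := F.le_opNorm _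
    have h3 : ‖F‖ * ‖y'‖ ≤ 1 * u :=
      mul_le_mul hF hnorm (norm_nonneg _) zero_le_one
    linarith
  linarith

/-- A net in the unit ball of `A` converging weak-star to a given `F` in the unit
ball of `A**`. -/
lemma exists_goldstine_net (F : StrongDual ℂ (StrongDual ℂ A)) (hF : ‖F‖ ≤ 1) :
    ∃ a : Finset (StrongDual ℂ A) × ℕ → A, (∀ i, ‖a i‖ ≤ 1) ∧
      Arens.WStarTendsto a atTop F := by
  haveI : DecidableEq (StrongDual ℂ A) := Classical.decEq _
  choose a h1 h2 using fun p : Finset (StrongDual ℂ A) × ℕ =>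
    goldstine F hF p.1 (ε := 1 / (p.2 + 1)) (by positivity)
  refine ⟨a, h1, fun x' => ?_⟩
  rw [Metric.tendsto_nhds]
  intro ε hε
  obtain ⟨N, hN⟩ := exists_nat_gt (1 / ε)
  rw [eventually_atTop]
  refine ⟨({x'}, N), fun p hp => ?_⟩
  have hx'mem : x' ∈ p.1 := hp.1 (Finset.mem_singleton_self x')
  have hd : ‖x' (a p) - F x'‖ ≤ 1 / (p.2 + 1) := h2 p x' hx'mem
  have hmono : (1 : ℝ) / (p.2 + 1) ≤ 1 / (N + 1) := by
    apply one_div_le_one_div_of_le (by positivity)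
    have h2 : (N : ℝ) ≤ (p.2 : ℝ) := Nat.cast_le.mpr hp.2
    linarith
  have hfin : (1 : ℝ) / (N + 1) < ε := by
    rw [div_lt_iff₀ (by positivity)]
    have h1 : 1 < ε * N := by
      have := (div_lt_iff₀ hε).mp hN
      linarith
    nlinarith
  rw [dist_eq_norm]
  exact lt_of_le_of_lt (hd.trans hmono) hfin

/-- Weak-star ultrafilter limits in the bidual, from Banach–Alaoglu. -/
lemma exists_ultrafilter_limit {ι : Type*} (U : Ultrafilter ι) (a : ι → A)
    (ha : ∀ i, ‖a i‖ ≤ 1) :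
    ∃ F : StrongDual ℂ (StrongDual ℂ A),
      ∀ x' : StrongDual ℂ A, Tendsto (fun i => x' (a i)) ↑U (𝓝 (F x')) := by
  set f : ι → WeakDual ℂ (StrongDual ℂ A) :=
    fun i => StrongDual.toWeakDual (inclusionInDoubleDual ℂ A (a i)) with hfdef
  have hmem : ∀ i, f i ∈ WeakDual.toStrongDual ⁻¹' closedBall 0 1 := fun i => by
    simp only [Set.mem_preimage, mem_closedBall_zero_iff]
    exact le_trans (double_dual_bound ℂ A (a i)) (ha i)
  obtain ⟨x, -, hx⟩ :=
    (WeakDual.isCompact_closedBall (𝕜 := ℂ) (E := StrongDual ℂ A) 0 1).ultrafilter_le_nhds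
      (U.map f)
      (by rw [Ultrafilter.coe_map, Filter.le_principal_iff, Filter.mem_map]
          exact Filter.univ_mem' hmem)
  refine ⟨WeakDual.toStrongDual x, fun x' => ?_⟩
  have htend : Tendsto f ↑U (𝓝 x) := by rwa [Ultrafilter.coe_map] at hx
  exact ((WeakDual.eval_continuous x').continuousAt.tendsto).comp htend

end ArensAux

/-- A functional `a' ∈ A*` is weakly almost periodic iff the two Arens products agree
against it; consequently `A` is Arens regular iff `wap(A) = A*`. -/
theorem wap_iff_arens_products_agree
    {A : Type*} [NonUnitalNormedRing A] [NormedSpace ℂ A]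
    [IsScalarTower ℂ A A] [SMulCommClass ℂ A A] [CompleteSpace A] :
    (∀ a' : StrongDual ℂ A, Arens.WAP a' ↔
      ∀ F G : StrongDual ℂ (StrongDual ℂ A), Arens.fstArens A F G a' = Arens.sndArens A F G a') ∧
    (Arens.ArensRegular A ↔ ∀ a' : StrongDual ℂ A, Arens.WAP a') := by
  classical
  have main : ∀ a' : StrongDual ℂ A, Arens.WAP a' ↔
      ∀ F G : StrongDual ℂ (StrongDual ℂ A), Arens.fstArens A F G a' = Arens.sndArens A F G a' := by
    intro a'
    constructor
    · intro hw F G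
      have key : ∀ F G : StrongDual ℂ (StrongDual ℂ A), ‖F‖ ≤ 1 → ‖G‖ ≤ 1 →
          Arens.fstArens A F G a' = Arens.sndArens A F G a' := by
        intro F G hF hG
        haveI : DecidableEq (StrongDual ℂ A) := Classical.decEq _
        obtain ⟨a, ha, haten⟩ := ArensAux.exists_goldstine_net F hF
        obtain ⟨b, hb, hbten⟩ := ArensAux.exists_goldstine_net G hG
        exact hw _ _ atTop atTop atTop_neBot atTop_neBot a b ha hb
          (fun i => G (Arens.adj (Arens.mulCLM A) a' (a i)))
          (fun j => F (Arens.adj (Arens.mulCLM A).flip a' (b j)))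
          _ _
          (fun i => hbten (Arens.adj (Arens.mulCLM A) a' (a i)))
          (haten (Arens.adj (Arens.adj (Arens.mulCLM A)) G a'))
          (fun j => haten (Arens.adj (Arens.mulCLM A).flip a' (b j)))
          (hbten (Arens.adj (Arens.adj (Arens.mulCLM A).flip) F a'))
      by_cases hF0 : F = 0
      · subst hF0
        simp only [Arens.fstArens, Arens.sndArens, ContinuousLinearMap.map_zero,
          ContinuousLinearMap.zero_apply]
      by_cases hG0 : G = 0
      · subst hG0
        simp only [Arens.fstArens, Arens.sndArens, ContinuousLinearMap.map_zero,
          ContinuousLinearMap.zero_apply]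
      have hFnr : ‖F‖ ≠ 0 := fun hh => hF0 ((ContinuousLinearMap.opNorm_zero_iff F).mp hh)
      have hGnr : ‖G‖ ≠ 0 := fun hh => hG0 ((ContinuousLinearMap.opNorm_zero_iff G).mp hh)
      set F₁ : StrongDual ℂ (StrongDual ℂ A) := ((‖F‖ : ℂ))⁻¹ • F with hF₁def
      set G₁ : StrongDual ℂ (StrongDual ℂ A) := ((‖G‖ : ℂ))⁻¹ • G with hG₁def
      have hFn : (‖F‖ : ℂ) ≠ 0 := Complex.ofReal_ne_zero.mpr hFnr
      have hGn : (‖G‖ : ℂ) ≠ 0 := Complex.ofReal_ne_zero.mpr hGnr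
      have hF₁ : F = (‖F‖ : ℂ) • F₁ := by
        rw [hF₁def, smul_smul, mul_inv_cancel₀ hFn, one_smul]
      have hG₁ : G = (‖G‖ : ℂ) • G₁ := by
        rw [hG₁def, smul_smul, mul_inv_cancel₀ hGn, one_smul]
      have hF₁n : ‖F₁‖ ≤ 1 := by
        rw [hF₁def, norm_smul, norm_inv, Complex.norm_real,
          Real.norm_of_nonneg (norm_nonneg _),
          inv_mul_cancel₀ hFnr]
      have hG₁n : ‖G₁‖ ≤ 1 := by
        rw [hG₁def, norm_smul, norm_inv, Complex.norm_real,
          Real.norm_of_nonneg (norm_nonneg _),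
          inv_mul_cancel₀ hGnr]
      have hk := key F₁ G₁ hF₁n hG₁n
      simp only [Arens.fstArens, Arens.sndArens] at hk ⊢
      rw [hF₁, hG₁]
      simp only [map_smul, ContinuousLinearMap.smul_apply, smul_eq_mul]
      rw [hk]; ring
    · intro hFG ι κ li lj hli hlj a b ha hb g h L L' hg hgL hh hhL'
      haveI := hli; haveI := hlj
      obtain ⟨F, hFten⟩ := ArensAux.exists_ultrafilter_limit (Ultrafilter.of li) a ha
      obtain ⟨G, hGten⟩ := ArensAux.exists_ultrafilter_limit (Ultrafilter.of lj) b hb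
      have hUi : ↑(Ultrafilter.of li) ≤ li := Ultrafilter.of_le li
      have hUj : ↑(Ultrafilter.of lj) ≤ lj := Ultrafilter.of_le lj
      have hg' : ∀ i, g i = G (Arens.adj (Arens.mulCLM A) a' (a i)) := fun i =>
        tendsto_nhds_unique ((hg i).mono_left hUj)
          (hGten (Arens.adj (Arens.mulCLM A) a' (a i)))
      have hh' : ∀ j, h j = F (Arens.adj (Arens.mulCLM A).flip a' (b j)) := fun j =>
        tendsto_nhds_unique ((hh j).mono_left hUi)
          (hFten (Arens.adj (Arens.mulCLM A).flip a' (b j)))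
      have hL : L = Arens.fstArens A F G a' := by
        refine tendsto_nhds_unique (hgL.mono_left hUi) ?_
        have heq : g = fun i => (Arens.adj (Arens.adj (Arens.mulCLM A)) G a') (a i) :=
          funext fun i => (hg' i).trans rfl
        rw [heq]
        exact hFten (Arens.adj (Arens.adj (Arens.mulCLM A)) G a')
      have hL' : L' = Arens.sndArens A F G a' := by
        refine tendsto_nhds_unique (hhL'.mono_left hUj) ?_
        have heq : h = fun j => (Arens.adj (Arens.adj (Arens.mulCLM A).flip) F a') (b j) :=
          funext fun j => (hh' j).trans rfl
        rw [heq]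
        exact hGten (Arens.adj (Arens.adj (Arens.mulCLM A).flip) F a')
      rw [hL, hL', hFG F G]
  refine ⟨main, ?_, ?_⟩
  · intro hreg a'
    exact (main a').mpr fun F G => by rw [hreg F G]
  · intro hwap F G
    ext a'
    exact (main a').mp (hwap a') F G
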